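/- For parameters β, α, γ, the operator T_i = -β + ((α+β+γ)x_i + γ x_{i+1} + 1 + (β+γ)(α+γ) x_i x_{i+1})∂_i on ℂ[x_1,...,x_n] satisfies the quadratic Hecke relation T_i² = (α - β)·T_i + αβ·id. -/

import Mathlib

open MvPolynomial

/-- The operator `T_i = -β + ((α+β+γ)x_i + γ x_{i+1} + 1 + (β+γ)(α+γ) x_i x_{i+1})∂_i`
satisfies the quadratic Hecke relation `T_i² = (α-β)·T_i + αβ·id`. -/
theorem hecke_quadratic_relation (n : ℕ) (i j : Fin n) (hij : (i : ℕ) + 1 = (j : ℕ))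
    (α β γ : ℂ)
    (D T : MvPolynomial (Fin n) ℂ → MvPolynomial (Fin n) ℂ)
    (hD : ∀ f, (X j - X i) * D f = rename (Equiv.swap i j) f - f)
    (hT : ∀ f, T f = C (-β) * f +
      (C (α + β + γ) * X i + C γ * X j + 1 + C ((β + γ) * (α + γ)) * (X i * X j)) * D f) :
    ∀ f, T (T f) = C (α - β) * T f + C (α * β) * f := by
  intro f
  have hij' : i ≠ j := by
    intro h; subst h; omega
  have hXne : (X j - X i : MvPolynomial (Fin n) ℂ) ≠ 0 := by
    rw [sub_ne_zero]
    exact fun h => hij' (X_injective h).symm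
  have hσi : Equiv.swap i j i = j := Equiv.swap_apply_left i j
  have hσj : Equiv.swap i j j = i := Equiv.swap_apply_right i j
  have hren2 : ∀ g : MvPolynomial (Fin n) ℂ,
      rename (Equiv.swap i j) (rename (Equiv.swap i j) g) = g := by
    intro g
    rw [rename_rename]
    have h : ((Equiv.swap i j : Fin n → Fin n) ∘ (Equiv.swap i j)) = id := by
      funext a; simp [Equiv.swap_apply_self]
    rw [h, rename_id, AlgHom.id_apply]
  have hDf : rename (Equiv.swap i j) (D f) = D f := by
    apply mul_left_cancel₀ hXne
    have h1 := congrArg (rename (Equiv.swap i j)) (hD f)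
    simp only [map_mul, map_sub, rename_X, hσi, hσj, hren2] at h1
    rw [hD f]
    linear_combination -h1
  have hDT : D (T f) = C α * D f := by
    apply mul_left_cancel₀ hXne
    have h2 := congrArg (rename (Equiv.swap i j)) (hT f)
    simp only [map_add, map_mul, map_sub, map_one, map_neg, rename_X, rename_C,
      hσi, hσj, hDf] at h2
    rw [hD (T f), h2, hT f]
    simp only [map_add, map_mul, map_neg]
    linear_combination (C β : MvPolynomial (Fin n) ℂ) * hD f
  rw [hT (T f), hDT, hT f]
  simp only [map_add, map_mul, map_sub, map_neg]
  ring
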